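/- arXiv:2205.07764 — 3 statements merged into one kernel-verified Lean document; each statement's English description precedes it below -/
import Mathlib

section
/- For the function f_0(x) = (M - |x|_1)_+ on ℝ^d, where |x|_1 = Σ|x_i| and M > 0, the squared L² norm equals 2^(d+1) M^(d+2) / (d+2)!. -/
open MeasureTheory

open intervalIntegral in
lemma my_oneD (k : ℕ) (hk : 1 ≤ k) (M : ℝ) :
    ∫ t : ℝ, (max (M - |t|) 0) ^ k = 2 * (max M 0) ^ (k + 1) / (k + 1) := by
  have h := integral_comp_abs (f := fun u => (max (M - u) 0) ^ k)
  rw [h]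
  rcases le_or_gt M 0 with hM | hM
  · rw [max_eq_right hM]
    rw [setIntegral_congr_fun measurableSet_Ioi (g := fun _ => (0:ℝ))
      (fun t ht => by
        have : M - t ≤ 0 := by simp at ht; linarith
        simp [max_eq_right this, zero_pow (by omega : k ≠ 0)])]
    simp [zero_pow (by omega : k + 1 ≠ 0)]
  · rw [max_eq_left hM.le]
    have hsplit : (Set.Ioi (0:ℝ)) = Set.Ioc 0 M ∪ Set.Ioi M := by
      rw [Set.Ioc_union_Ioi_eq_Ioi hM.le]
    have hzero : ∫ t in Set.Ioi M, (max (M - t) 0) ^ k = 0 := by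
      rw [setIntegral_congr_fun measurableSet_Ioi (g := fun _ => (0:ℝ))
        (fun t ht => by
          have : M - t ≤ 0 := by simp at ht; linarith
          simp [max_eq_right this, zero_pow (by omega : k ≠ 0)])]
      simp
    have hI : ∫ t in Set.Ioc 0 M, (max (M - t) 0) ^ k = M ^ (k+1) / (k+1) := by
      rw [setIntegral_congr_fun measurableSet_Ioc (g := fun t => (M - t) ^ k)
        (fun t ht => by
          have : 0 ≤ M - t := by simp at ht; linarith
          simp [max_eq_left this])]
      rw [← integral_of_le hM.le]
      rw [integral_comp_sub_left (fun u : ℝ => u ^ k) M]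
      rw [sub_self, sub_zero, integral_pow]
      simp
    have hunion : ∫ t in Set.Ioi (0:ℝ), (max (M - t) 0) ^ k
        = (∫ t in Set.Ioc 0 M, (max (M - t) 0) ^ k) + ∫ t in Set.Ioi M, (max (M - t) 0) ^ k := by
      rw [hsplit]
      apply setIntegral_union
      · exact Set.Ioc_disjoint_Ioi le_rfl
      · exact measurableSet_Ioi
      · apply (Continuous.integrableOn_Ioc ?_)
        exact ((continuous_const.sub continuous_id).max continuous_const).pow k
      · exact (integrable_congr (by
          filter_upwards [ae_restrict_mem measurableSet_Ioi] with t ht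
          have : M - t ≤ 0 := by simp at ht; linarith
          simp [max_eq_right this, zero_pow (by omega : k ≠ 0)])).mpr (integrable_zero _ _ _)
    rw [hunion, hzero, hI]
    ring

lemma my_integrable (d : ℕ) (M : ℝ) :
    Integrable (fun x : Fin d → ℝ => (max (M - ∑ i, |x i|) 0) ^ 2) := by
  have hc : Continuous (fun x : Fin d → ℝ => (max (M - ∑ i, |x i|) 0) ^ 2) :=
    ((continuous_const.sub (continuous_finset_sum _ fun i _ =>
      (continuous_apply i).abs)).max continuous_const).pow 2
  apply hc.integrable_of_hasCompactSupport
  apply HasCompactSupport.intro (isCompact_closedBall (0 : Fin d → ℝ) |M|)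
  intro x hx
  by_contra h
  apply hx
  have h1 : 0 < max (M - ∑ i, |x i|) 0 := by
    rcases lt_or_eq_of_le (le_max_right (M - ∑ i, |x i|) (0:ℝ)) with h' | h'
    · exact h'
    · exact absurd (by rw [← h']; ring) h
  have h2 : ∑ i, |x i| < M := by
    rcases max_cases (M - ∑ i, |x i|) (0:ℝ) with ⟨he, _⟩ | ⟨he, _⟩ <;> rw [he] at h1 <;> linarith
  rw [Metric.mem_closedBall, dist_zero_right]
  rw [pi_norm_le_iff_of_nonneg (abs_nonneg M)]
  intro i
  have : |x i| ≤ ∑ j, |x j| := Finset.single_le_sum (fun j _ => abs_nonneg (x j)) (Finset.mem_univ i)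
  calc ‖x i‖ = |x i| := rfl
  _ ≤ |M| := by cases abs_cases M <;> linarith

lemma my_aux (d : ℕ) (M : ℝ) :
    ∫ x : Fin d → ℝ, (max (M - ∑ i, |x i|) 0) ^ 2
      = 2 ^ (d + 1) * (max M 0) ^ (d + 2) / (Nat.factorial (d + 2)) := by
  induction d generalizing M with
  | zero =>
      simp only [Finset.univ_eq_empty, Finset.sum_empty, sub_zero]
      rw [MeasureTheory.integral_const]
      have hvol : (volume : Measure (Fin 0 → ℝ)) Set.univ = 1 := by
        rw [volume_pi, Measure.pi_univ]; simp
      rw [measureReal_def, hvol]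
      norm_num [Nat.factorial]
  | succ n ih =>
      have hint := my_integrable (n + 1) M
      have hmp := (volume_preserving_piFinSuccAbove (fun _ : Fin (n + 1) => ℝ) 0).symm
      rw [← hmp.integral_comp (MeasurableEquiv.measurableEmbedding _)
        (fun x => (max (M - ∑ i, |x i|) 0) ^ 2)]
      have hint2 : Integrable
          (fun p : ℝ × (Fin n → ℝ) =>
            (max (M - ∑ i, |(MeasurableEquiv.piFinSuccAbove (fun _ : Fin (n+1) => ℝ) 0).symm p i|) 0) ^ 2) :=
        (hmp.integrable_comp_emb (MeasurableEquiv.measurableEmbedding _)).mpr hint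
      rw [show (volume : Measure (ℝ × (Fin n → ℝ))) = volume.prod volume from Measure.volume_eq_prod ℝ (Fin n → ℝ)] at hint2 ⊢
      rw [integral_prod _ hint2]
      have hsum : ∀ (t : ℝ) (y : Fin n → ℝ),
          ∑ i, |(MeasurableEquiv.piFinSuccAbove (fun _ : Fin (n+1) => ℝ) 0).symm (t, y) i|
            = |t| + ∑ i, |y i| := by
        intro t y
        rw [Fin.sum_univ_succAbove _ 0]
        simp [MeasurableEquiv.piFinSuccAbove]
      have hin : ∀ t : ℝ,
          (∫ y : Fin n → ℝ,
            (max (M - ∑ i, |(MeasurableEquiv.piFinSuccAbove (fun _ : Fin (n+1) => ℝ) 0).symm (t, y) i|) 0) ^ 2)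
          = 2 ^ (n + 1) * (max (M - |t|) 0) ^ (n + 2) / (Nat.factorial (n + 2)) := by
        intro t
        rw [← ih (M - |t|)]
        congr 1
        ext y
        rw [hsum t y]
        ring_nf
      simp only [hin]
      have hre : ∀ x : ℝ, 2 ^ (n+1) * (max (M - |x|) 0) ^ (n+2) / (Nat.factorial (n+2) : ℝ)
          = (2 ^ (n+1) / (Nat.factorial (n+2) : ℝ)) * (max (M - |x|) 0) ^ (n+2) := fun x => by ring
      simp_rw [hre]
      rw [MeasureTheory.integral_const_mul, my_oneD (n + 2) (by omega) M]
      have h1 : ((Nat.factorial (n+2) : ℝ)) ≠ 0 := Nat.cast_ne_zero.mpr (Nat.factorial_ne_zero _)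
      have h2 : (((n+2 : ℕ):ℝ) + 1) ≠ 0 := by positivity
      have hfac : ((Nat.factorial (n+1+2) : ℝ)) = (((n+2:ℕ):ℝ) + 1) * (Nat.factorial (n+2) : ℝ) := by
        rw [show n+1+2 = (n+2)+1 from rfl, Nat.factorial_succ]
        push_cast
        ring
      rw [hfac, show n+2+1 = n+1+2 from rfl]
      field_simp
      ring

/-- The squared L² norm of `f₀(x) = (M - |x|₁)₊` on `ℝ^d` equals `2^(d+1) M^(d+2) / (d+2)!`. -/
theorem stmt_0 (d : ℕ) (hd : 1 ≤ d) (M : ℝ) (hM : 0 < M) :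
    ∫ x : Fin d → ℝ, (max (M - ∑ i, |x i|) 0) ^ 2 =
      2 ^ (d + 1) * M ^ (d + 2) / (Nat.factorial (d + 2)) := by
  rw [my_aux d M, max_eq_left hM.le]
end

section
/- In the model y = θ + σw, w ~ N(0, I_m), σ > 0, for any matrix A ∈ ℝ^{m×m} with diagonal entries a_{jj}, letting ā = sqrt((1/m)Σ_j a_{jj}²), the homogeneous diagonal estimator θ̂ = ā y satisfies max_{θ ∈ Θ_m} E_θ |ā y - θ|² ≤ max_{θ ∈ Θ_m} E_θ |A y - θ|², where Θ_m = {e_1,…,e_m}. -/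
open MeasureTheory ProbabilityTheory Real Finset

noncomputable section GaussAux

lemma integral_pi_prod' {ι : Type*} [Fintype ι] (γ : Measure ℝ) [SigmaFinite γ]
    (f : ι → ℝ → ℝ) :
    ∫ x : ι → ℝ, ∏ i, f i (x i) ∂(Measure.pi fun _ => γ) = ∏ i, ∫ x, f i x ∂γ := by
  letI : MeasureSpace ℝ := ⟨γ⟩
  haveI : SigmaFinite (volume : Measure ℝ) := ‹SigmaFinite γ›
  exact MeasureTheory.integral_fintype_prod_eq_prod f

lemma integrable_pi_prod' {ι : Type*} [Fintype ι] (γ : Measure ℝ) [SigmaFinite γ]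
    (f : ι → ℝ → ℝ) (hf : ∀ i, Integrable (f i) γ) :
    Integrable (fun x : ι → ℝ => ∏ i, f i (x i)) (Measure.pi fun _ => γ) := by
  letI : MeasureSpace ℝ := ⟨γ⟩
  haveI : SigmaFinite (volume : Measure ℝ) := ‹SigmaFinite γ›
  exact MeasureTheory.Integrable.fintype_prod hf

lemma integrable_gauss01 (g : ℝ → ℝ)
    (h : Integrable (fun x => g x * Real.exp (-(1/2) * x ^ 2))) :
    Integrable g (gaussianReal 0 1) := by
  rw [gaussianReal_of_var_ne_zero _ one_ne_zero,
    integrable_withDensity_iff (measurable_gaussianPDF 0 1)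
      (Filter.Eventually.of_forall fun x => ENNReal.ofReal_lt_top)]
  have heq : (fun x => g x * ((gaussianPDF 0 1 x).toReal))
      = fun x => (Real.sqrt (2 * Real.pi))⁻¹ * (g x * Real.exp (-(1/2) * x ^ 2)) := by
    funext x
    rw [gaussianPDF, ENNReal.toReal_ofReal (gaussianPDFReal_nonneg _ _ _), gaussianPDFReal]
    have h2 : -(x - 0) ^ 2 / (2 * ((1:NNReal):ℝ)) = -(1/2) * x ^ 2 := by
      push_cast; ring
    rw [h2]
    push_cast
    ring
  rw [heq]
  exact h.const_mul _

lemma integrable_id_gauss01 : Integrable (fun x : ℝ => x) (gaussianReal 0 1) := by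
  apply integrable_gauss01
  simpa using integrable_mul_exp_neg_mul_sq (b := (1/2 : ℝ)) (by norm_num)

lemma integrable_sq_gauss01 : Integrable (fun x : ℝ => x * x) (gaussianReal 0 1) := by
  apply integrable_gauss01
  have := integrable_rpow_mul_exp_neg_mul_sq (b := (1/2 : ℝ)) (by norm_num) (s := 2) (by norm_num)
  convert this using 2 with x
  rw [show (2:ℝ) = ((2:ℕ):ℝ) by norm_num, Real.rpow_natCast]
  ring

lemma integral_id_gauss01 : ∫ x, x ∂(gaussianReal 0 1) = 0 := by
  have hmap : (gaussianReal 0 1).map (fun x => (-1 : ℝ) * x) = gaussianReal 0 1 := by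
    rw [show (fun x => (-1:ℝ) * x) = ((-1 : ℝ) * ·) from rfl, gaussianReal_map_const_mul]
    congr 1 <;> norm_num
  have h1 : ∫ x, x ∂(gaussianReal 0 1) = ∫ x, (-1) * x ∂(gaussianReal 0 1) := by
    conv_lhs => rw [← hmap]
    exact (integral_map (f := fun x : ℝ => x) (φ := fun x : ℝ => (-1:ℝ) * x)
      ((measurable_id.const_mul (-1:ℝ)).aemeasurable) (by rw [hmap]; exact aestronglyMeasurable_id))
  have h2 : ∫ x, (-1:ℝ) * x ∂(gaussianReal 0 1) = -∫ x, x ∂(gaussianReal 0 1) := by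
    simp only [neg_one_mul]; rw [integral_neg]
  linarith [h1.trans h2]

end GaussAux

section PiMoments

variable {m : ℕ} (γ : Measure ℝ) [IsProbabilityMeasure γ]
  (i1 : Integrable (fun x : ℝ => x) γ) (i2 : Integrable (fun x : ℝ => x * x) γ)
  (e1 : ∫ x, x ∂γ = 0)

lemma integral_pi_prod'' {ι : Type*} [Fintype ι] (f : ι → ℝ → ℝ) :
    ∫ x : ι → ℝ, ∏ i, f i (x i) ∂(Measure.pi fun _ => γ) = ∏ i, ∫ x, f i x ∂γ := by
  letI : MeasureSpace ℝ := ⟨γ⟩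
  haveI : SigmaFinite (volume : Measure ℝ) := inferInstanceAs (SigmaFinite γ)
  exact MeasureTheory.integral_fintype_prod_eq_prod f

lemma integrable_pi_prod'' {ι : Type*} [Fintype ι] (f : ι → ℝ → ℝ)
    (hf : ∀ i, Integrable (f i) γ) :
    Integrable (fun x : ι → ℝ => ∏ i, f i (x i)) (Measure.pi fun _ => γ) := by
  letI : MeasureSpace ℝ := ⟨γ⟩
  haveI : SigmaFinite (volume : Measure ℝ) := inferInstanceAs (SigmaFinite γ)
  exact MeasureTheory.Integrable.fintype_prod hf

include i1 e1 in
lemma moment1_pi (k : Fin m) :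
    Integrable (fun w : Fin m → ℝ => w k) (Measure.pi fun _ => γ) ∧
    ∫ w : Fin m → ℝ, w k ∂(Measure.pi fun _ => γ) = 0 := by
  set g : Fin m → ℝ → ℝ := fun i x => if i = k then x else 1 with hg
  have hpt : (fun w : Fin m → ℝ => w k) = fun w => ∏ i, g i (w i) := by
    funext w
    rw [hg]
    simp only []
    rw [Finset.prod_ite_eq' Finset.univ k (fun i => w i)]
    simp
  have hint : ∀ i, Integrable (g i) γ := by
    intro i
    by_cases h : i = k
    · simpa [hg, h] using i1
    · simpa [hg, h] using (integrable_const (1:ℝ) (μ := γ))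
  constructor
  · rw [hpt]; exact integrable_pi_prod'' γ g hint
  · rw [hpt, integral_pi_prod'' γ g]
    refine Finset.prod_eq_zero (Finset.mem_univ k) ?_
    simp [hg, e1]

include i1 i2 e1 in
lemma moment2_pi (k l : Fin m) :
    Integrable (fun w : Fin m → ℝ => w k * w l) (Measure.pi fun _ => γ) ∧
    ∫ w : Fin m → ℝ, w k * w l ∂(Measure.pi fun _ => γ)
      = if k = l then (∫ x, x * x ∂γ) else 0 := by
  set g : Fin m → ℝ → ℝ :=
    fun i x => (if i = k then x else 1) * (if i = l then x else 1) with hg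
  have hpt : (fun w : Fin m → ℝ => w k * w l) = fun w => ∏ i, g i (w i) := by
    funext w
    rw [hg]
    simp only []
    rw [Finset.prod_mul_distrib, Finset.prod_ite_eq' Finset.univ k (fun i => w i),
      Finset.prod_ite_eq' Finset.univ l (fun i => w i)]
    simp
  have hint : ∀ i, Integrable (g i) γ := by
    intro i
    by_cases hk : i = k
    · subst hk
      by_cases hl : i = l
      · subst hl; simpa [hg] using i2
      · simpa [hg, hl] using i1
    · by_cases hl : i = l
      · subst hl; simpa [hg, hk] using i1
      · simpa [hg, hk, hl] using (integrable_const (1:ℝ) (μ := γ))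
  constructor
  · rw [hpt]; exact integrable_pi_prod'' γ g hint
  · rw [hpt, integral_pi_prod'' γ]
    by_cases hkl : k = l
    · subst hkl
      have : ∀ i, ∫ x, g i x ∂γ = if i = k then (∫ x, x * x ∂γ) else 1 := by
        intro i
        by_cases h : i = k <;> simp [hg, h]
      rw [Finset.prod_congr rfl (fun i _ => this i),
        Finset.prod_ite_eq' Finset.univ k (fun _ => ∫ x, x * x ∂γ)]
      simp
    · rw [if_neg hkl]
      refine Finset.prod_eq_zero (Finset.mem_univ k) ?_
      simp [hg, hkl, e1]

end PiMoments

section Affine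

variable {m : ℕ} (γ : Measure ℝ) [IsProbabilityMeasure γ]
  (i1 : Integrable (fun x : ℝ => x) γ) (i2 : Integrable (fun x : ℝ => x * x) γ)
  (e1 : ∫ x, x ∂γ = 0)

include i1 i2 e1 in
lemma affine_sq_pi (c : ℝ) (b : Fin m → ℝ) :
    Integrable (fun w : Fin m → ℝ => (c + ∑ k, b k * w k) ^ 2) (Measure.pi fun _ => γ) ∧
    ∫ w : Fin m → ℝ, (c + ∑ k, b k * w k) ^ 2 ∂(Measure.pi fun _ => γ)
      = c ^ 2 + (∑ k, (b k) ^ 2) * (∫ x, x * x ∂γ) := by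
  set μm := (Measure.pi fun _ : Fin m => γ) with hμm
  have hpt : (fun w : Fin m → ℝ => (c + ∑ k, b k * w k) ^ 2)
      = fun w => c ^ 2 + (∑ k, (2 * c * b k) * w k)
          + ∑ k, ∑ l, (b k * b l) * (w k * w l) := by
    funext w
    have h1 : ∑ k, (2 * c * b k) * w k = 2 * c * ∑ k, b k * w k := by
      rw [Finset.mul_sum]
      exact Finset.sum_congr rfl fun k _ => by ring
    have h2 : ∑ k, ∑ l, (b k * b l) * (w k * w l)
        = (∑ k, b k * w k) * (∑ l, b l * w l) := by
      rw [Finset.sum_mul_sum]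
      exact Finset.sum_congr rfl fun k _ => Finset.sum_congr rfl fun l _ => by ring
    rw [h1, h2]
    ring
  have ia : Integrable (fun w : Fin m → ℝ => ∑ k, (2 * c * b k) * w k) μm :=
    integrable_finset_sum _ fun k _ => ((moment1_pi γ i1 e1 k).1.const_mul _)
  have ib : Integrable
      (fun w : Fin m → ℝ => ∑ k, ∑ l, (b k * b l) * (w k * w l)) μm :=
    integrable_finset_sum _ fun k _ =>
      integrable_finset_sum _ fun l _ => ((moment2_pi γ i1 i2 e1 k l).1.const_mul _)
  have ic : Integrable (fun w : Fin m → ℝ => c ^ 2 + ∑ k, (2 * c * b k) * w k) μm :=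
    (integrable_const _).add ia
  constructor
  · rw [hpt]; exact ic.add ib
  · have hm1 : ∀ k : Fin m, ∫ w : Fin m → ℝ, w k ∂μm = 0 :=
      fun k => (moment1_pi γ i1 e1 k).2
    have hm2 : ∀ k l : Fin m, ∫ w : Fin m → ℝ, w k * w l ∂μm
        = if k = l then (∫ x, x * x ∂γ) else 0 :=
      fun k l => (moment2_pi γ i1 i2 e1 k l).2
    have h3 : ∀ k : Fin m,
        ∫ w : Fin m → ℝ, (∑ l, (b k * b l) * (w k * w l)) ∂μm
          = b k ^ 2 * (∫ x, x * x ∂γ) := by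
      intro k
      rw [integral_finset_sum _ fun l _ => ((moment2_pi γ i1 i2 e1 k l).1.const_mul _)]
      simp only [integral_const_mul, ← hμm, hm2]
      simp only [mul_ite, mul_zero, Finset.sum_ite_eq, Finset.mem_univ, if_true]
      ring
    rw [hpt, integral_add ic ib, integral_add (integrable_const _) ia, integral_const,
      integral_finset_sum _ fun k _ => ((moment1_pi γ i1 e1 k).1.const_mul _),
      integral_finset_sum _ (fun k _ => integrable_finset_sum _
        fun l _ => ((moment2_pi γ i1 i2 e1 k l).1.const_mul _))]
    simp only [integral_const_mul, ← hμm, hm1, mul_zero, Finset.sum_const_zero, add_zero, h3,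
      measure_univ, probReal_univ, one_smul, smul_eq_mul]
    rw [← Finset.sum_mul, one_mul]

include i1 i2 e1 in
lemma sum_affine_sq_pi (c : Fin m → ℝ) (b : Fin m → Fin m → ℝ) :
    ∫ w : Fin m → ℝ, (∑ i, (c i + ∑ k, b i k * w k) ^ 2) ∂(Measure.pi fun _ => γ)
      = ∑ i, (c i) ^ 2 + (∑ i, ∑ k, (b i k) ^ 2) * (∫ x, x * x ∂γ) := by
  rw [integral_finset_sum _ fun i _ => (affine_sq_pi γ i1 i2 e1 (c i) (b i)).1]
  have : ∀ i : Fin m, ∫ w : Fin m → ℝ, (c i + ∑ k, b i k * w k) ^ 2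
      ∂(Measure.pi fun _ => γ)
      = (c i) ^ 2 + (∑ k, (b i k) ^ 2) * (∫ x, x * x ∂γ) :=
    fun i => (affine_sq_pi γ i1 i2 e1 (c i) (b i)).2
  simp only [this]
  rw [Finset.sum_add_distrib, ← Finset.sum_mul]

end Affine

/-- In the one-sparse Gaussian sequence model, any linear estimator `θ̂ = A y` is
dominated in maximal risk over `Θ_m = {e_1,…,e_m}` by the homogeneous diagonal
estimator `θ̂ = ā y` with `ā = √((1/m) Σ_j a_{jj}²)`. -/
theorem stmt_6 (m : ℕ) (hm : 1 ≤ m) (σ : ℝ) (hσ : 0 < σ)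
    (A : Matrix (Fin m) (Fin m) ℝ)
    (abar : ℝ) (habar : abar = Real.sqrt ((1 / m) * ∑ j, (A j j) ^ 2))
    (e : Fin m → Fin m → ℝ) (he : ∀ j i, e j i = if i = j then 1 else 0) :
    (⨆ j : Fin m,
      ∫ w : Fin m → ℝ,
        (∑ i, (abar * (e j i + σ * w i) - e j i) ^ 2)
        ∂(Measure.pi fun _ : Fin m => gaussianReal 0 1)) ≤
    ⨆ j : Fin m,
      ∫ w : Fin m → ℝ,
        (∑ i, (A.mulVec (fun i' => e j i' + σ * w i') i - e j i) ^ 2)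
        ∂(Measure.pi fun _ : Fin m => gaussianReal 0 1) := by
  haveI : Nonempty (Fin m) := ⟨⟨0, hm⟩⟩
  have hm0 : (0:ℝ) < (m:ℝ) := by exact_mod_cast hm
  set γ : Measure ℝ := gaussianReal 0 1 with hγ
  have i1 : Integrable (fun x : ℝ => x) γ := integrable_id_gauss01
  have i2 : Integrable (fun x : ℝ => x * x) γ := integrable_sq_gauss01
  have e1 : ∫ x, x ∂γ = 0 := integral_id_gauss01
  set K : ℝ := ∫ x, x * x ∂γ with hKdef
  have hK : 0 ≤ K := integral_nonneg fun x => mul_self_nonneg x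
  set D : ℝ := ∑ j, (A j j) ^ 2 with hD
  set S : ℝ := ∑ i, ∑ k, (A i k) ^ 2 with hS
  set T : ℝ := ∑ j, A j j with hT
  set L : ℝ := (abar - 1) ^ 2 + ((m : ℝ) * (abar * σ) ^ 2) * K with hLdef
  -- closed form of the LHS risks
  have hL : ∀ j : Fin m,
      (∫ w : Fin m → ℝ, (∑ i, (abar * (e j i + σ * w i) - e j i) ^ 2)
        ∂(Measure.pi fun _ : Fin m => γ)) = L := by
    intro j
    have hpt : ∀ w : Fin m → ℝ, ∀ i : Fin m,
        (abar * (e j i + σ * w i) - e j i)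
          = ((abar - 1) * e j i + ∑ k, (if i = k then abar * σ else 0) * w k) := by
      intro w i
      have : ∑ k, (if i = k then abar * σ else 0) * w k = abar * σ * w i := by
        simp [ite_mul, Finset.sum_ite_eq]
      rw [this]; ring
    have step : (∫ w : Fin m → ℝ, (∑ i, (abar * (e j i + σ * w i) - e j i) ^ 2)
        ∂(Measure.pi fun _ : Fin m => γ))
        = ∫ w : Fin m → ℝ,
            (∑ i, (((abar - 1) * e j i) + ∑ k, (if i = k then abar * σ else 0) * w k) ^ 2)
            ∂(Measure.pi fun _ : Fin m => γ) := by
      apply integral_congr_ae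
      filter_upwards with w
      exact Finset.sum_congr rfl fun i _ => by rw [hpt w i]
    rw [step, sum_affine_sq_pi γ i1 i2 e1 (fun i => (abar - 1) * e j i)
      (fun i k => if i = k then abar * σ else 0)]
    have hc : ∑ i, ((abar - 1) * e j i) ^ 2 = (abar - 1) ^ 2 := by
      simp [he, mul_ite, ite_pow, Finset.sum_ite_eq']
    have hb : ∑ i : Fin m, ∑ k : Fin m, (if i = k then abar * σ else 0) ^ 2
        = (m : ℝ) * (abar * σ) ^ 2 := by
      simp [ite_pow, Finset.sum_ite_eq, Finset.sum_const, Finset.card_univ, nsmul_eq_mul]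
    rw [hc, hb]
  -- closed form of the RHS risks
  have hR : ∀ j : Fin m,
      (∫ w : Fin m → ℝ, (∑ i, (A.mulVec (fun i' => e j i' + σ * w i') i - e j i) ^ 2)
        ∂(Measure.pi fun _ : Fin m => γ))
        = ∑ i, (A i j - e j i) ^ 2 + (σ ^ 2 * S) * K := by
    intro j
    have hpt : ∀ w : Fin m → ℝ, ∀ i : Fin m,
        (A.mulVec (fun i' => e j i' + σ * w i') i - e j i)
          = ((A i j - e j i) + ∑ k, (σ * A i k) * w k) := by
      intro w i
      have h1 : A.mulVec (fun i' => e j i' + σ * w i') i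
          = ∑ k, A i k * (e j k + σ * w k) := by
        simp [Matrix.mulVec, dotProduct]
      have h2 : ∑ k, A i k * (e j k + σ * w k)
          = (∑ k, A i k * e j k) + ∑ k, (σ * A i k) * w k := by
        rw [← Finset.sum_add_distrib]
        exact Finset.sum_congr rfl fun k _ => by ring
      have h3 : ∑ k, A i k * e j k = A i j := by
        simp [he, mul_ite, Finset.sum_ite_eq']
      rw [h1, h2, h3]; ring
    have step : (∫ w : Fin m → ℝ, (∑ i, (A.mulVec (fun i' => e j i' + σ * w i') i - e j i) ^ 2)
        ∂(Measure.pi fun _ : Fin m => γ))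
        = ∫ w : Fin m → ℝ,
            (∑ i, ((A i j - e j i) + ∑ k, (σ * A i k) * w k) ^ 2)
            ∂(Measure.pi fun _ : Fin m => γ) := by
      apply integral_congr_ae
      filter_upwards with w
      exact Finset.sum_congr rfl fun i _ => by rw [hpt w i]
    rw [step, sum_affine_sq_pi γ i1 i2 e1 (fun i => A i j - e j i)
      (fun i k => σ * A i k)]
    have hb : ∑ i : Fin m, ∑ k : Fin m, (σ * A i k) ^ 2 = σ ^ 2 * S := by
      rw [hS, Finset.mul_sum]
      exact Finset.sum_congr rfl fun i _ => by
        rw [Finset.mul_sum]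
        exact Finset.sum_congr rfl fun k _ => by ring
    rw [hb]
  -- rewrite both suprema
  rw [iSup_congr hL, iSup_congr hR, ciSup_const]
  set R : Fin m → ℝ := fun j => ∑ i, (A i j - e j i) ^ 2 + (σ ^ 2 * S) * K with hRdef
  -- basic inequalities
  have habar0 : 0 ≤ abar := habar ▸ Real.sqrt_nonneg _
  have hD0 : 0 ≤ D := Finset.sum_nonneg fun j _ => sq_nonneg _
  have habar2 : (m : ℝ) * abar ^ 2 = D := by
    rw [habar, Real.sq_sqrt (by positivity)]
    field_simp
  have hDS : D ≤ S := by
    rw [hD, hS]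
    exact Finset.sum_le_sum fun j _ =>
      Finset.single_le_sum (fun k _ => sq_nonneg (A j k)) (Finset.mem_univ j)
  have hS0 : 0 ≤ S := hD0.trans hDS
  have hTle : T ≤ (m : ℝ) * abar := by
    have hcs : T ^ 2 ≤ ((m : ℝ) * abar) ^ 2 := by
      have h := Finset.sum_mul_sq_le_sq_mul_sq Finset.univ (fun j : Fin m => A j j)
        (fun _ => (1 : ℝ))
      simp only [mul_one, one_pow, Finset.sum_const, Finset.card_univ, Fintype.card_fin,
        nsmul_eq_mul, mul_one] at h
      calc T ^ 2 ≤ D * (m : ℝ) := h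
        _ = ((m : ℝ) * abar) ^ 2 := by rw [← habar2]; ring
    by_contra hcon
    push_neg at hcon
    nlinarith [mul_nonneg hm0.le habar0]
  -- the diagonal sum identity
  have hdiag : ∑ j : Fin m, ∑ i : Fin m, (A i j - e j i) ^ 2 = S - 2 * T + (m : ℝ) := by
    have hinner : ∀ j : Fin m,
        ∑ i : Fin m, (A i j - e j i) ^ 2
          = (∑ i, (A i j) ^ 2) - 2 * A j j + 1 := by
      intro j
      have hexp : ∀ i : Fin m, (A i j - e j i) ^ 2
          = (A i j) ^ 2 - 2 * (A i j * e j i) + (e j i) ^ 2 := fun i => by ring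
      rw [Finset.sum_congr rfl fun i _ => hexp i]
      rw [Finset.sum_add_distrib, Finset.sum_sub_distrib, ← Finset.mul_sum]
      have hx : ∑ i, A i j * e j i = A j j := by
        simp [he, mul_ite, Finset.sum_ite_eq']
      have hy : ∑ i : Fin m, (e j i) ^ 2 = 1 := by
        simp [he, ite_pow, Finset.sum_ite_eq']
      rw [hx, hy]
    rw [Finset.sum_congr rfl fun j _ => hinner j]
    rw [Finset.sum_add_distrib, Finset.sum_sub_distrib, ← Finset.mul_sum]
    rw [Finset.sum_comm]
    simp only [Finset.sum_const, Finset.card_univ, Fintype.card_fin, nsmul_eq_mul, mul_one]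
    rfl
  -- conclude
  have hsumR : ∑ j, R j = (S - 2 * T + (m : ℝ)) + (m : ℝ) * ((σ ^ 2 * S) * K) := by
    rw [hRdef]
    rw [Finset.sum_add_distrib, hdiag]
    simp [Finset.sum_const, Finset.card_univ, nsmul_eq_mul]
  have hkey : (m : ℝ) * L ≤ ∑ j, R j := by
    rw [hsumR]
    have hexpand : (m : ℝ) * L
        = (((m:ℝ) * abar ^ 2) - 2 * ((m:ℝ) * abar) + (m:ℝ))
          + ((m:ℝ) * (σ ^ 2 * K)) * ((m:ℝ) * abar ^ 2) := by
      rw [hLdef]; ring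
    rw [hexpand, habar2]
    have hprod : ((m:ℝ) * (σ ^ 2 * K)) * D ≤ ((m:ℝ) * (σ ^ 2 * K)) * S :=
      mul_le_mul_of_nonneg_left hDS (by positivity)
    nlinarith
  have hbdd : BddAbove (Set.range R) := (Set.finite_range R).bddAbove
  have hsup : ∑ j, R j ≤ (m : ℝ) * ⨆ j, R j := by
    calc ∑ j, R j ≤ ∑ _j : Fin m, ⨆ j', R j' :=
          Finset.sum_le_sum fun j _ => le_ciSup hbdd j
      _ = (m : ℝ) * ⨆ j', R j' := by
          simp [Finset.sum_const, Finset.card_univ, nsmul_eq_mul]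
  exact le_of_mul_le_mul_left (hkey.trans hsup) hm0
end

section
/- Let k ≥ 1 and d ≥ 1 be integers and m = k^d. For each grid point a in I = {((ℓ_1 - 1/2)/k, …, (ℓ_d - 1/2)/k) : ℓ_i ∈ {1,…,k}}, define f_a(x) = (1/(2k) - |x - a|_1)_+ on [0,1]^d. Then the m functions f_a have pairwise disjoint supports (hence are pairwise orthogonal in L²[0,1]^d) and each satisfies ‖f_a‖_{L²}² = (1/(2(d+2)!)) k^{-(d+2)}. -/
open MeasureTheory

private lemma integrable_F (n : ℕ) (c : ℝ) :
    Integrable (fun x : Fin n → ℝ => (max (c - ∑ i, |x i|) 0) ^ 2) := by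
  have hc : Continuous (fun x : Fin n → ℝ => (max (c - ∑ i, |x i|) 0) ^ 2) := by
    apply Continuous.pow
    exact (continuous_const.sub (continuous_finset_sum _ fun i _ =>
      (continuous_apply i).abs)).max continuous_const
  apply hc.integrable_of_hasCompactSupport
  apply HasCompactSupport.intro (isCompact_univ_pi fun _ => isCompact_Icc (a := -|c|) (b := |c|))
  intro x hx
  rw [Set.mem_univ_pi] at hx
  push_neg at hx
  obtain ⟨i, hi⟩ := hx
  simp only [Set.mem_Icc, not_and_or, not_le] at hi
  have h1 : |c| < |x i| := by rcases hi with h | h <;> [skip; skip] <;> cases abs_cases (x i) <;> linarith [abs_nonneg (x i), neg_abs_le (x i), le_abs_self (x i)]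
  have h2 : |x i| ≤ ∑ j, |x j| := Finset.single_le_sum (f := fun j => |x j|) (fun j _ => abs_nonneg _) (Finset.mem_univ i)
  have h3 : c - ∑ j, |x j| ≤ 0 := by nlinarith [le_abs_self c]
  simp [max_eq_right h3]

private lemma one_dim (c : ℝ) (p : ℕ) :
    ∫ t : ℝ, max (c - |t|) 0 ^ (p + 1) = 2 * max c 0 ^ (p + 2) / (p + 2) := by
  rw [integral_comp_abs (f := fun t => max (c - t) 0 ^ (p + 1))]
  rcases le_or_gt c 0 with hc | hc
  · rw [max_eq_right hc]
    have : ∀ x ∈ Set.Ioi (0:ℝ), max (c - x) 0 ^ (p + 1) = 0 := by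
      intro x hx
      rw [max_eq_right (by simp only [Set.mem_Ioi] at hx; linarith)]
      simp
    rw [setIntegral_congr_fun measurableSet_Ioi this]
    simp
  · rw [max_eq_left hc.le, ← Set.Ioc_union_Ioi_eq_Ioi hc.le,
      setIntegral_union (Set.Ioc_disjoint_Ioi le_rfl) measurableSet_Ioi]
    · have h1 : ∀ x ∈ Set.Ioc (0:ℝ) c, max (c - x) 0 ^ (p + 1) = (c - x) ^ (p + 1) := by
        intro x hx
        rw [max_eq_left (by simp only [Set.mem_Ioc] at hx; linarith)]
      have h2 : ∀ x ∈ Set.Ioi c, max (c - x) 0 ^ (p + 1) = 0 := by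
        intro x hx
        rw [max_eq_right (by simp only [Set.mem_Ioi] at hx; linarith)]
        simp
      rw [setIntegral_congr_fun measurableSet_Ioc h1, setIntegral_congr_fun measurableSet_Ioi h2,
        integral_zero, add_zero, ← intervalIntegral.integral_of_le hc.le,
        intervalIntegral.integral_comp_sub_left (fun x => x ^ (p + 1)) c]
      simp only [sub_self, sub_zero, integral_pow]
      push_cast
      ring
    · exact ((continuous_const.sub continuous_id).max continuous_const).pow _ |>.integrableOn_Ioc
    · apply IntegrableOn.congr_fun (f := fun _ => (0:ℝ))
      · simp [integrableOn_const]
      · intro x hx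
        symm
        show max (c - x) 0 ^ (p + 1) = 0
        rw [max_eq_right (by simp only [Set.mem_Ioi] at hx; linarith)]
        simp
      · exact measurableSet_Ioi

private lemma key : ∀ (n : ℕ) (c : ℝ),
    ∫ x : Fin n → ℝ, max (c - ∑ i, |x i|) 0 ^ 2
      = 2 ^ (n + 1) * max c 0 ^ (n + 2) / (n + 2).factorial := by
  intro n
  induction n with
  | zero =>
    intro c
    have : ∀ x : Fin 0 → ℝ, max (c - ∑ i, |x i|) 0 ^ 2 = max c 0 ^ 2 := by
      intro x; simp
    rw [integral_congr_ae (Filter.Eventually.of_forall this), integral_const, volume_pi,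
      measureReal_def, Measure.pi_univ]
    simp [Nat.factorial]
  | succ n ih =>
    intro c
    have hmp := volume_preserving_piFinSuccAbove (fun _ : Fin (n + 1) => ℝ) 0
    set e := MeasurableEquiv.piFinSuccAbove (fun _ : Fin (n + 1) => ℝ) 0 with he
    have hcomp := (hmp.symm e).integral_comp e.symm.measurableEmbedding
      (fun x : Fin (n + 1) → ℝ => max (c - ∑ i, |x i|) 0 ^ 2)
    rw [← hcomp]
    have hint : Integrable ((fun x : Fin (n + 1) → ℝ => max (c - ∑ i, |x i|) 0 ^ 2) ∘ e.symm)
        ((volume : Measure ℝ).prod (volume : Measure (Fin n → ℝ))) := by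
      rw [← Measure.volume_eq_prod ℝ (Fin n → ℝ), (hmp.symm e).integrable_comp_emb e.symm.measurableEmbedding]
      exact integrable_F (n + 1) c
    have hint' : Integrable (fun z : ℝ × (Fin n → ℝ) => max (c - ∑ i, |e.symm z i|) 0 ^ 2)
        ((volume : Measure ℝ).prod (volume : Measure (Fin n → ℝ))) := hint
    rw [Measure.volume_eq_prod ℝ (Fin n → ℝ), integral_prod _ hint']
    have hpt : ∀ t : ℝ, ∀ y : Fin n → ℝ,
        max (c - ∑ i, |(e.symm (t, y)) i|) 0 ^ 2 = max ((c - |t|) - ∑ i, |y i|) 0 ^ 2 := by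
      intro t y
      congr 2
      have : ∑ i, |(e.symm (t, y)) i| = |(e.symm (t, y)) 0| + ∑ i, |(e.symm (t, y)) ((0:Fin (n+1)).succAbove i)| :=
        Fin.sum_univ_succAbove _ 0
      rw [this]
      simp [he, MeasurableEquiv.piFinSuccAbove, Fin.insertNth_apply_same,
        Fin.insertNth_apply_succAbove]
      ring
    have : ∀ t : ℝ, ∫ y : Fin n → ℝ, max (c - ∑ i, |(e.symm (t, y)) i|) 0 ^ 2
        = 2 ^ (n + 1) * max (c - |t|) 0 ^ (n + 2) / (n + 2).factorial := by
      intro t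
      rw [integral_congr_ae (Filter.Eventually.of_forall (hpt t))]
      exact ih (c - |t|)
    calc ∫ t : ℝ, ∫ y : Fin n → ℝ, max (c - ∑ i, |e.symm (t, y) i|) 0 ^ 2
        = ∫ t : ℝ, 2 ^ (n + 1) / (n + 2).factorial * max (c - |t|) 0 ^ (n + 2) := by
          apply integral_congr_ae (Filter.Eventually.of_forall _)
          intro t
          rw [this t]; ring
      _ = 2 ^ (n + 1) / (n + 2).factorial * ∫ t : ℝ, max (c - |t|) 0 ^ (n + 2) := integral_const_mul _ _
      _ = 2 ^ (n + 1 + 1) * max c 0 ^ (n + 1 + 2) / (n + 1 + 2).factorial := by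
          rw [show n + 2 = (n + 1) + 1 from rfl, one_dim c (n + 1)]
          rw [show n + 1 + 2 = n + 3 from rfl, show n + 1 + 1 + 1 = n + 3 from rfl,
            Nat.factorial_succ (n + 2)]
          have h1 : ((n + 2).factorial : ℝ) ≠ 0 := Nat.cast_ne_zero.2 (n + 2).factorial_ne_zero
          have h2 : ((n : ℝ) + 3) ≠ 0 := by positivity
          field_simp
          push_cast
          ring

/-- The `m = k^d` bump functions `f_a(x) = (1/(2k) - |x - a|₁)₊`, centered at the
grid points `a = ((ℓ₁ - 1/2)/k, …, (ℓ_d - 1/2)/k)`, have pairwise disjoint supports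
and squared L² norm `(1/(2(d+2)!)) k^{-(d+2)}` on `[0,1]^d`. -/
theorem stmt_8 (d k : ℕ) (hd : 1 ≤ d) (hk : 1 ≤ k)
    (f : (Fin d → Fin k) → (Fin d → ℝ) → ℝ)
    (hf : ∀ ℓ x, f ℓ x =
      max (1 / (2 * k) - ∑ i, |x i - ((ℓ i : ℝ) + 1 / 2) / k|) 0) :
    (∀ ℓ ℓ' : Fin d → Fin k, ℓ ≠ ℓ' → ∀ x, f ℓ x = 0 ∨ f ℓ' x = 0) ∧
    (∀ ℓ, ∫ x in Set.univ.pi (fun _ : Fin d => Set.Icc (0:ℝ) 1), (f ℓ x) ^ 2 =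
      (1 / (2 * (Nat.factorial (d + 2)))) * ((k : ℝ) ^ (d + 2))⁻¹) := by
  have hk0 : (0:ℝ) < k := by exact_mod_cast Nat.lt_of_lt_of_le Nat.zero_lt_one hk
  constructor
  · intro ℓ ℓ' hne x
    by_contra hcon
    push_neg at hcon
    obtain ⟨h1, h2⟩ := hcon
    rw [hf] at h1 h2
    have hy1 : (0:ℝ) < 1 / (2 * k) - ∑ i, |x i - ((ℓ i : ℝ) + 1 / 2) / k| := by
      by_contra hle; push_neg at hle; exact h1 (max_eq_right hle)
    have hy2 : (0:ℝ) < 1 / (2 * k) - ∑ i, |x i - ((ℓ' i : ℝ) + 1 / 2) / k| := by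
      by_contra hle; push_neg at hle; exact h2 (max_eq_right hle)
    obtain ⟨i, hi⟩ := Function.ne_iff.mp hne
    have hb1 : |x i - ((ℓ i : ℝ) + 1 / 2) / k| ≤ ∑ j, |x j - ((ℓ j : ℝ) + 1 / 2) / k| :=
      Finset.single_le_sum (f := fun j => |x j - ((ℓ j : ℝ) + 1 / 2) / k|)
        (fun j _ => abs_nonneg _) (Finset.mem_univ i)
    have hb2 : |x i - ((ℓ' i : ℝ) + 1 / 2) / k| ≤ ∑ j, |x j - ((ℓ' j : ℝ) + 1 / 2) / k| :=
      Finset.single_le_sum (f := fun j => |x j - ((ℓ' j : ℝ) + 1 / 2) / k|)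
        (fun j _ => abs_nonneg _) (Finset.mem_univ i)
    have hint : (1:ℝ) ≤ |(ℓ i : ℝ) - (ℓ' i : ℝ)| := by
      have hz : ((ℓ i : ℤ)) ≠ ((ℓ' i : ℤ)) := by
        simpa using fun h => hi (Fin.ext (by exact_mod_cast h))
      have := Int.one_le_abs (sub_ne_zero.mpr hz)
      exact_mod_cast this
    have hdist : (1:ℝ) / k ≤ |((ℓ i : ℝ) + 1 / 2) / k - ((ℓ' i : ℝ) + 1 / 2) / k| := by
      rw [div_sub_div_same, abs_div, abs_of_pos hk0]
      have : (ℓ i : ℝ) + 1 / 2 - ((ℓ' i : ℝ) + 1 / 2) = (ℓ i : ℝ) - (ℓ' i : ℝ) := by ring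
      rw [this]
      gcongr
    have htri := abs_sub_le (((ℓ i : ℝ) + 1 / 2) / k) (x i) (((ℓ' i : ℝ) + 1 / 2) / k)
    rw [abs_sub_comm (((ℓ i : ℝ) + 1 / 2) / k) (x i)] at htri
    have h2k : 1 / (2 * (k:ℝ)) + 1 / (2 * (k:ℝ)) = 1 / k := by
      rw [← add_div, show (2 : ℝ) * k = k * 2 by ring, ← div_div,
        show (1:ℝ) + 1 = 2 from by norm_num, div_right_comm]
      norm_num
    linarith
  · intro ℓ
    simp_rw [hf]
    have hvanish : ∀ x ∉ Set.univ.pi (fun _ : Fin d => Set.Icc (0:ℝ) 1),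
        max (1 / (2 * (k:ℝ)) - ∑ i, |x i - ((ℓ i : ℝ) + 1 / 2) / k|) 0 ^ 2 = 0 := by
      intro x hx
      rw [Set.mem_univ_pi] at hx
      push_neg at hx
      obtain ⟨i, hi⟩ := hx
      have hlb : 1 / (2 * (k:ℝ)) ≤ ((ℓ i : ℝ) + 1 / 2) / k := by
        rw [div_le_div_iff₀ (by linarith) hk0]
        have : (0:ℝ) ≤ (ℓ i : ℝ) := by positivity
        ring_nf
        nlinarith
      have hub : ((ℓ i : ℝ) + 1 / 2) / k ≤ 1 - 1 / (2 * (k:ℝ)) := by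
        have h1 : (ℓ i : ℝ) + 1 ≤ k := by exact_mod_cast Nat.succ_le_of_lt (ℓ i).isLt
        rw [div_le_iff₀ hk0]
        have : 1 / (2 * (k:ℝ)) * k = 1 / 2 := by
          rw [div_mul_eq_mul_div, mul_comm 2 (k:ℝ), ← div_div, mul_div_assoc,
            div_self hk0.ne', mul_one]
        nlinarith
      have hfar : 1 / (2 * (k:ℝ)) ≤ |x i - ((ℓ i : ℝ) + 1 / 2) / k| := by
        simp only [Set.mem_Icc, not_and_or, not_le] at hi
        rcases hi with h | h
        · calc 1 / (2 * (k:ℝ)) ≤ ((ℓ i : ℝ) + 1 / 2) / k - x i := by linarith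
            _ ≤ |x i - ((ℓ i : ℝ) + 1 / 2) / k| := by
                rw [abs_sub_comm]; exact le_abs_self _
        · calc 1 / (2 * (k:ℝ)) ≤ x i - ((ℓ i : ℝ) + 1 / 2) / k := by linarith
            _ ≤ |x i - ((ℓ i : ℝ) + 1 / 2) / k| := le_abs_self _
      have hsum : |x i - ((ℓ i : ℝ) + 1 / 2) / k| ≤ ∑ j, |x j - ((ℓ j : ℝ) + 1 / 2) / k| :=
        Finset.single_le_sum (f := fun j => |x j - ((ℓ j : ℝ) + 1 / 2) / k|)
          (fun j _ => abs_nonneg _) (Finset.mem_univ i)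
      rw [max_eq_right (by linarith)]
      simp
    rw [setIntegral_eq_integral_of_forall_compl_eq_zero hvanish]
    have hrw : (fun x : Fin d → ℝ => max (1 / (2 * (k:ℝ)) - ∑ i, |x i - ((ℓ i : ℝ) + 1 / 2) / k|) 0 ^ 2)
        = fun x : Fin d → ℝ =>
          (fun y : Fin d → ℝ => max (1 / (2 * (k:ℝ)) - ∑ i, |y i|) 0 ^ 2)
            (x - fun j => ((ℓ j : ℝ) + 1 / 2) / k) := by
      funext x
      simp [Pi.sub_apply]
    rw [hrw, integral_sub_right_eq_self
      (fun y : Fin d → ℝ => max (1 / (2 * (k:ℝ)) - ∑ i, |y i|) 0 ^ 2) _, key d _]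
    rw [max_eq_left (by positivity)]
    have hfac : ((d + 2).factorial : ℝ) ≠ 0 := Nat.cast_ne_zero.2 (d + 2).factorial_ne_zero
    have hkne : (k:ℝ) ≠ 0 := ne_of_gt hk0
    rw [div_pow, one_pow]
    field_simp
    ring
end
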